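/- arXiv:cond-mat/0409047 — 2 statements merged into one kernel-verified Lean document; each statement's English description precedes it below -/
import Mathlib

section
/- Fix 0 < β ≤ log 4 and set K_c^{(2)}(β) := 1/(4βe^{−β}) + 1/(2β) = 1/(2β c_β''(0)). Then: (a) for 0 < K < K_c^{(2)}(β), G_{β,K}''(0) = 2βK(1 − K/K_c^{(2)}(β)) > 0; (b) for K = K_c^{(2)}(β): G_{β,K}''(0) = 0, and if β < log 4 then G_{β,K}^{(4)}(0) = −(2βK)⁴ c_β^{(4)}(0) > 0, while if β = log 4 then G_{β,K}^{(4)}(0) = 0 and G_{β,K}^{(6)}(0) = 2(2βK)⁶/9 > 0; (c) for K > K_c^{(2)}(β), every nonzero global minimum point z of G_{β,K} over ℝ satisfies G_{β,K}''(z) > 0. -/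
noncomputable section

/-- `c_β(t) = log[(1 + e^{−β}(e^t + e^{−t}))/(1 + 2e^{−β})]`. -/
def cBeta (β t : ℝ) : ℝ :=
  Real.log ((1 + Real.exp (-β) * (Real.exp t + Real.exp (-t))) / (1 + 2 * Real.exp (-β)))

/-- `G_{β,K}(z) = βK z² − c_β(2βK z)`. -/
def Gfun (β K z : ℝ) : ℝ := β * K * z ^ 2 - cBeta β (2 * β * K * z)

/-- The second-order critical value `K_c^{(2)}(β) = 1/(4βe^{−β}) + 1/(2β)`. -/
def Kc2 (β : ℝ) : ℝ := 1 / (4 * β * Real.exp (-β)) + 1 / (2 * β)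

def c1f (a t : ℝ) : ℝ :=
  ((-1) * a ^ 1 * Real.exp t ^ 0 + 1 * a ^ 1 * Real.exp t ^ 2) /
    (a * Real.exp t ^ 2 + Real.exp t + a) ^ 1

def c2f (a t : ℝ) : ℝ :=
  (1 * a ^ 1 * Real.exp t ^ 1 + 1 * a ^ 1 * Real.exp t ^ 3 + 4 * a ^ 2 * Real.exp t ^ 2) /
    (a * Real.exp t ^ 2 + Real.exp t + a) ^ 2

def c3f (a t : ℝ) : ℝ :=
  ((-1) * a ^ 1 * Real.exp t ^ 2 + 1 * a ^ 1 * Real.exp t ^ 4 + 1 * a ^ 2 * Real.exp t ^ 1 + (-1) * a ^ 2 * Real.exp t ^ 5 + 8 * a ^ 3 * Real.exp t ^ 2 + (-8) * a ^ 3 * Real.exp t ^ 4) /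
    (a * Real.exp t ^ 2 + Real.exp t + a) ^ 3

def c4f (a t : ℝ) : ℝ :=
  (1 * a ^ 1 * Real.exp t ^ 3 + 1 * a ^ 1 * Real.exp t ^ 5 + (-4) * a ^ 2 * Real.exp t ^ 2 + 8 * a ^ 2 * Real.exp t ^ 4 + (-4) * a ^ 2 * Real.exp t ^ 6 + 1 * a ^ 3 * Real.exp t ^ 1 + (-13) * a ^ 3 * Real.exp t ^ 3 + (-13) * a ^ 3 * Real.exp t ^ 5 + 1 * a ^ 3 * Real.exp t ^ 7 + 16 * a ^ 4 * Real.exp t ^ 2 + (-64) * a ^ 4 * Real.exp t ^ 4 + 16 * a ^ 4 * Real.exp t ^ 6) /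
    (a * Real.exp t ^ 2 + Real.exp t + a) ^ 4

def c5f (a t : ℝ) : ℝ :=
  ((-1) * a ^ 1 * Real.exp t ^ 4 + 1 * a ^ 1 * Real.exp t ^ 6 + 11 * a ^ 2 * Real.exp t ^ 3 + (-11) * a ^ 2 * Real.exp t ^ 7 + (-11) * a ^ 3 * Real.exp t ^ 2 + 69 * a ^ 3 * Real.exp t ^ 4 + (-69) * a ^ 3 * Real.exp t ^ 6 + 11 * a ^ 3 * Real.exp t ^ 8 + 1 * a ^ 4 * Real.exp t ^ 1 + (-78) * a ^ 4 * Real.exp t ^ 3 + 78 * a ^ 4 * Real.exp t ^ 7 + (-1) * a ^ 4 * Real.exp t ^ 9 + 32 * a ^ 5 * Real.exp t ^ 2 + (-352) * a ^ 5 * Real.exp t ^ 4 + 352 * a ^ 5 * Real.exp t ^ 6 + (-32) * a ^ 5 * Real.exp t ^ 8) /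
    (a * Real.exp t ^ 2 + Real.exp t + a) ^ 5

def c6f (a t : ℝ) : ℝ :=
  (1 * a ^ 1 * Real.exp t ^ 5 + 1 * a ^ 1 * Real.exp t ^ 7 + (-26) * a ^ 2 * Real.exp t ^ 4 + 12 * a ^ 2 * Real.exp t ^ 6 + (-26) * a ^ 2 * Real.exp t ^ 8 + 66 * a ^ 3 * Real.exp t ^ 3 + (-146) * a ^ 3 * Real.exp t ^ 5 + (-146) * a ^ 3 * Real.exp t ^ 7 + 66 * a ^ 3 * Real.exp t ^ 9 + (-26) * a ^ 4 * Real.exp t ^ 2 + 520 * a ^ 4 * Real.exp t ^ 4 + (-828) * a ^ 4 * Real.exp t ^ 6 + 520 * a ^ 4 * Real.exp t ^ 8 + (-26) * a ^ 4 * Real.exp t ^ 10 + 1 * a ^ 5 * Real.exp t ^ 1 + (-339) * a ^ 5 * Real.exp t ^ 3 + 898 * a ^ 5 * Real.exp t ^ 5 + 898 * a ^ 5 * Real.exp t ^ 7 + (-339) * a ^ 5 * Real.exp t ^ 9 + 1 * a ^ 5 * Real.exp t ^ 11 + 64 * a ^ 6 * Real.exp t ^ 2 + (-1664) * a ^ 6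 * Real.exp t ^ 4 + 4224 * a ^ 6 * Real.exp t ^ 6 + (-1664) * a ^ 6 * Real.exp t ^ 8 + 64 * a ^ 6 * Real.exp t ^ 10) /
    (a * Real.exp t ^ 2 + Real.exp t + a) ^ 6

lemma hd1 (a : ℝ) (ha : 0 < a) (t : ℝ) :
    HasDerivAt (fun s => c1f a s) (c2f a t) t := by
  have hx : ∀ s : ℝ, HasDerivAt Real.exp (Real.exp s) s := fun s => Real.hasDerivAt_exp s
  have hR := ((((hx t).pow 2).const_mul a).add (hx t)).add_const a
  have hRk := hR.pow 1
  have hRkne : (a * Real.exp t ^ 2 + Real.exp t + a) ^ 1 ≠ 0 := by positivity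
  have hnum := ((((hx t).pow 0).const_mul ((-1) * a ^ 1)).add (((hx t).pow 2).const_mul (1 * a ^ 1)))
  have h := hnum.div hRk hRkne
  simp only [c1f, c2f]
  refine h.congr_deriv ?_
  simp only [Pi.add_apply, Pi.pow_apply, Pi.sub_apply, Pi.div_apply, id_eq]
  push_cast
  field_simp
  ring

lemma hd2 (a : ℝ) (ha : 0 < a) (t : ℝ) :
    HasDerivAt (fun s => c2f a s) (c3f a t) t := by
  have hx : ∀ s : ℝ, HasDerivAt Real.exp (Real.exp s) s := fun s => Real.hasDerivAt_exp s
  have hR := ((((hx t).pow 2).const_mul a).add (hx t)).add_const a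
  have hRk := hR.pow 2
  have hRkne : (a * Real.exp t ^ 2 + Real.exp t + a) ^ 2 ≠ 0 := by positivity
  have hnum := (((((hx t).pow 1).const_mul (1 * a ^ 1)).add (((hx t).pow 3).const_mul (1 * a ^ 1))).add (((hx t).pow 2).const_mul (4 * a ^ 2)))
  have h := hnum.div hRk hRkne
  simp only [c2f, c3f]
  refine h.congr_deriv ?_
  simp only [Pi.add_apply, Pi.pow_apply, Pi.sub_apply, Pi.div_apply, id_eq]
  push_cast
  field_simp
  ring

lemma hd3 (a : ℝ) (ha : 0 < a) (t : ℝ) :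
    HasDerivAt (fun s => c3f a s) (c4f a t) t := by
  have hx : ∀ s : ℝ, HasDerivAt Real.exp (Real.exp s) s := fun s => Real.hasDerivAt_exp s
  have hR := ((((hx t).pow 2).const_mul a).add (hx t)).add_const a
  have hRk := hR.pow 3
  have hRkne : (a * Real.exp t ^ 2 + Real.exp t + a) ^ 3 ≠ 0 := by positivity
  have hnum := ((((((((hx t).pow 2).const_mul ((-1) * a ^ 1)).add (((hx t).pow 4).const_mul (1 * a ^ 1))).add (((hx t).pow 1).const_mul (1 * a ^ 2))).add (((hx t).pow 5).const_mul ((-1) * a ^ 2))).add (((hx t).pow 2).const_mul (8 * a ^ 3))).add (((hx t).pow 4).const_mul ((-8) * a ^ 3)))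
  have h := hnum.div hRk hRkne
  simp only [c3f, c4f]
  refine h.congr_deriv ?_
  simp only [Pi.add_apply, Pi.pow_apply, Pi.sub_apply, Pi.div_apply, id_eq]
  push_cast
  field_simp
  ring

lemma hd4 (a : ℝ) (ha : 0 < a) (t : ℝ) :
    HasDerivAt (fun s => c4f a s) (c5f a t) t := by
  have hx : ∀ s : ℝ, HasDerivAt Real.exp (Real.exp s) s := fun s => Real.hasDerivAt_exp s
  have hR := ((((hx t).pow 2).const_mul a).add (hx t)).add_const a
  have hRk := hR.pow 4
  have hRkne : (a * Real.exp t ^ 2 + Real.exp t + a) ^ 4 ≠ 0 := by positivity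
  have hnum := ((((((((((((((hx t).pow 3).const_mul (1 * a ^ 1)).add (((hx t).pow 5).const_mul (1 * a ^ 1))).add (((hx t).pow 2).const_mul ((-4) * a ^ 2))).add (((hx t).pow 4).const_mul (8 * a ^ 2))).add (((hx t).pow 6).const_mul ((-4) * a ^ 2))).add (((hx t).pow 1).const_mul (1 * a ^ 3))).add (((hx t).pow 3).const_mul ((-13) * a ^ 3))).add (((hx t).pow 5).const_mul ((-13) * a ^ 3))).add (((hx t).pow 7).const_mul (1 * a ^ 3))).add (((hx t).pow 2).const_mul (16 * a ^ 4))).add (((hx t).pow 4).const_mul ((-64) * a ^ 4))).add (((hx t).pow 6).const_mul (16 * a ^ 4)))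
  have h := hnum.div hRk hRkne
  simp only [c4f, c5f]
  refine h.congr_deriv ?_
  simp only [Pi.add_apply, Pi.pow_apply, Pi.sub_apply, Pi.div_apply, id_eq]
  push_cast
  field_simp
  ring

lemma hd5 (a : ℝ) (ha : 0 < a) (t : ℝ) :
    HasDerivAt (fun s => c5f a s) (c6f a t) t := by
  have hx : ∀ s : ℝ, HasDerivAt Real.exp (Real.exp s) s := fun s => Real.hasDerivAt_exp s
  have hR := ((((hx t).pow 2).const_mul a).add (hx t)).add_const a
  have hRk := hR.pow 5
  have hRkne : (a * Real.exp t ^ 2 + Real.exp t + a) ^ 5 ≠ 0 := by positivity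
  have hnum := ((((((((((((((((((hx t).pow 4).const_mul ((-1) * a ^ 1)).add (((hx t).pow 6).const_mul (1 * a ^ 1))).add (((hx t).pow 3).const_mul (11 * a ^ 2))).add (((hx t).pow 7).const_mul ((-11) * a ^ 2))).add (((hx t).pow 2).const_mul ((-11) * a ^ 3))).add (((hx t).pow 4).const_mul (69 * a ^ 3))).add (((hx t).pow 6).const_mul ((-69) * a ^ 3))).add (((hx t).pow 8).const_mul (11 * a ^ 3))).add (((hx t).pow 1).const_mul (1 * a ^ 4))).add (((hx t).pow 3).const_mul ((-78) * a ^ 4))).add (((hx t).pow 7).const_mul (78 * a ^ 4))).add (((hx t).pow 9).const_mul ((-1) * a ^ 4))).add (((hx t).pow 2).const_mul (32 * a ^ 5))).add (((hx t).pow 4).const_mul ((-352) * a ^ 5))).add (((hx t).pow 6).const_mul (352 * a ^ 5))).add (((hx t).pow 8).const_mul ((-32) * a ^ 5)))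
  have h := hnum.div hRk hRkne
  simp only [c5f, c6f]
  refine h.congr_deriv ?_
  simp only [Pi.add_apply, Pi.pow_apply, Pi.sub_apply, Pi.div_apply, id_eq]
  push_cast
  field_simp
  ring


/-- `cBeta` in rational-in-`exp` form. -/
lemma cBeta_eq (β : ℝ) :
    cBeta β = fun t => Real.log (Real.exp (-β) * Real.exp t ^ 2 + Real.exp t + Real.exp (-β))
      - t - Real.log (1 + 2 * Real.exp (-β)) := by
  funext t
  unfold cBeta
  have ha : (0:ℝ) < Real.exp (-β) := Real.exp_pos _
  have hxpos : (0:ℝ) < Real.exp t := Real.exp_pos t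
  have hnum : (0:ℝ) < 1 + Real.exp (-β) * (Real.exp t + Real.exp (-t)) := by positivity
  have hden : (0:ℝ) < 1 + 2 * Real.exp (-β) := by positivity
  rw [Real.log_div hnum.ne' hden.ne']
  have key : 1 + Real.exp (-β) * (Real.exp t + Real.exp (-t))
      = (Real.exp (-β) * Real.exp t ^ 2 + Real.exp t + Real.exp (-β)) * Real.exp (-t) := by
    rw [Real.exp_neg t]
    field_simp
    ring
  rw [key, Real.log_mul (by positivity) (Real.exp_pos _).ne', Real.log_exp]
  ring

lemma hd0 (β t : ℝ) : HasDerivAt (cBeta β) (c1f (Real.exp (-β)) t) t := by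
  rw [cBeta_eq β]
  have ha : (0:ℝ) < Real.exp (-β) := Real.exp_pos _
  have hx : ∀ s : ℝ, HasDerivAt Real.exp (Real.exp s) s := fun s => Real.hasDerivAt_exp s
  have hR := ((((hx t).pow 2).const_mul (Real.exp (-β))).add (hx t)).add_const (Real.exp (-β))
  have hRpos : (0:ℝ) < Real.exp (-β) * Real.exp t ^ 2 + Real.exp t + Real.exp (-β) := by
    positivity
  have h := ((hR.log hRpos.ne').sub (hasDerivAt_id t)).sub_const
    (Real.log (1 + 2 * Real.exp (-β)))
  refine h.congr_deriv ?_
  simp only [c1f, Pi.add_apply, Pi.pow_apply, Pi.sub_apply, id_eq]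
  push_cast
  field_simp
  ring

lemma icb1 (β : ℝ) : iteratedDeriv 1 (cBeta β) = fun t => c1f (Real.exp (-β)) t := by
  rw [iteratedDeriv_one]; funext t; exact (hd0 β t).deriv

lemma icb2 (β : ℝ) : iteratedDeriv 2 (cBeta β) = fun t => c2f (Real.exp (-β)) t := by
  rw [show (2:ℕ) = 1 + 1 from rfl, iteratedDeriv_succ, icb1]
  funext t; exact (hd1 _ (Real.exp_pos _) t).deriv

lemma icb3 (β : ℝ) : iteratedDeriv 3 (cBeta β) = fun t => c3f (Real.exp (-β)) t := by
  rw [show (3:ℕ) = 2 + 1 from rfl, iteratedDeriv_succ, icb2]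
  funext t; exact (hd2 _ (Real.exp_pos _) t).deriv

lemma icb4 (β : ℝ) : iteratedDeriv 4 (cBeta β) = fun t => c4f (Real.exp (-β)) t := by
  rw [show (4:ℕ) = 3 + 1 from rfl, iteratedDeriv_succ, icb3]
  funext t; exact (hd3 _ (Real.exp_pos _) t).deriv

def g1f (β K z : ℝ) : ℝ := 2 * β * K * z - 2 * β * K * c1f (Real.exp (-β)) (2 * β * K * z)
def g2f (β K z : ℝ) : ℝ := 2 * β * K - (2 * β * K) ^ 2 * c2f (Real.exp (-β)) (2 * β * K * z)
def g3f (β K z : ℝ) : ℝ := (-(2 * β * K) ^ 3) * c3f (Real.exp (-β)) (2 * β * K * z)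
def g4f (β K z : ℝ) : ℝ := (-(2 * β * K) ^ 4) * c4f (Real.exp (-β)) (2 * β * K * z)
def g5f (β K z : ℝ) : ℝ := (-(2 * β * K) ^ 5) * c5f (Real.exp (-β)) (2 * β * K * z)
def g6f (β K z : ℝ) : ℝ := (-(2 * β * K) ^ 6) * c6f (Real.exp (-β)) (2 * β * K * z)

lemma hlin (β K z : ℝ) : HasDerivAt (fun w : ℝ => 2 * β * K * w) (2 * β * K) z := by
  simpa using (hasDerivAt_id z).const_mul (2 * β * K)

lemma hG0 (β K z : ℝ) : HasDerivAt (Gfun β K) (g1f β K z) z := by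
  have h1 : HasDerivAt (fun w : ℝ => β * K * w ^ 2) (β * K * (2 * z)) z := by
    simpa using (hasDerivAt_pow 2 z).const_mul (β * K)
  have h2 := (hd0 β (2 * β * K * z)).comp z (hlin β K z)
  simp only [Function.comp_def] at h2
  have h := h1.sub h2
  show HasDerivAt (fun w => β * K * w ^ 2 - cBeta β (2 * β * K * w)) (g1f β K z) z
  refine h.congr_deriv ?_
  simp only [g1f]
  ring

lemma hG1 (β K z : ℝ) : HasDerivAt (fun w => g1f β K w) (g2f β K z) z := by
  have h2 := (hd1 _ (Real.exp_pos (-β)) (2 * β * K * z)).comp z (hlin β K z)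
  simp only [Function.comp_def] at h2
  have h := (hlin β K z).sub (h2.const_mul (2 * β * K))
  simp only [g1f]
  refine h.congr_deriv ?_
  simp only [g2f]
  ring

lemma hG2 (β K z : ℝ) : HasDerivAt (fun w => g2f β K w) (g3f β K z) z := by
  have h2 := (hd2 _ (Real.exp_pos (-β)) (2 * β * K * z)).comp z (hlin β K z)
  simp only [Function.comp_def] at h2
  have h := (h2.const_mul ((2 * β * K) ^ 2)).const_sub (2 * β * K)
  simp only [g2f]
  refine h.congr_deriv ?_
  simp only [g3f]
  ring

lemma hG3 (β K z : ℝ) : HasDerivAt (fun w => g3f β K w) (g4f β K z) z := by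
  have h2 := (hd3 _ (Real.exp_pos (-β)) (2 * β * K * z)).comp z (hlin β K z)
  simp only [Function.comp_def] at h2
  have h := h2.const_mul (-(2 * β * K) ^ 3)
  simp only [g3f]
  refine h.congr_deriv ?_
  simp only [g4f]
  ring

lemma hG4 (β K z : ℝ) : HasDerivAt (fun w => g4f β K w) (g5f β K z) z := by
  have h2 := (hd4 _ (Real.exp_pos (-β)) (2 * β * K * z)).comp z (hlin β K z)
  simp only [Function.comp_def] at h2
  have h := h2.const_mul (-(2 * β * K) ^ 4)
  simp only [g4f]
  refine h.congr_deriv ?_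
  simp only [g5f]
  ring

lemma hG5 (β K z : ℝ) : HasDerivAt (fun w => g5f β K w) (g6f β K z) z := by
  have h2 := (hd5 _ (Real.exp_pos (-β)) (2 * β * K * z)).comp z (hlin β K z)
  simp only [Function.comp_def] at h2
  have h := h2.const_mul (-(2 * β * K) ^ 5)
  simp only [g5f]
  refine h.congr_deriv ?_
  simp only [g6f]
  ring

lemma iG1 (β K : ℝ) : iteratedDeriv 1 (Gfun β K) = fun z => g1f β K z := by
  rw [iteratedDeriv_one]; funext z; exact (hG0 β K z).deriv

lemma iG2 (β K : ℝ) : iteratedDeriv 2 (Gfun β K) = fun z => g2f β K z := by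
  rw [show (2:ℕ) = 1 + 1 from rfl, iteratedDeriv_succ, iG1]
  funext z; exact (hG1 β K z).deriv

lemma iG3 (β K : ℝ) : iteratedDeriv 3 (Gfun β K) = fun z => g3f β K z := by
  rw [show (3:ℕ) = 2 + 1 from rfl, iteratedDeriv_succ, iG2]
  funext z; exact (hG2 β K z).deriv

lemma iG4 (β K : ℝ) : iteratedDeriv 4 (Gfun β K) = fun z => g4f β K z := by
  rw [show (4:ℕ) = 3 + 1 from rfl, iteratedDeriv_succ, iG3]
  funext z; exact (hG3 β K z).deriv

lemma iG5 (β K : ℝ) : iteratedDeriv 5 (Gfun β K) = fun z => g5f β K z := by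
  rw [show (5:ℕ) = 4 + 1 from rfl, iteratedDeriv_succ, iG4]
  funext z; exact (hG4 β K z).deriv

lemma iG6 (β K : ℝ) : iteratedDeriv 6 (Gfun β K) = fun z => g6f β K z := by
  rw [show (6:ℕ) = 5 + 1 from rfl, iteratedDeriv_succ, iG5]
  funext z; exact (hG5 β K z).deriv

open Topology

/-- If `f' z = 0` and `f'` has negative derivative at `z`, then `z` is not a global min. -/
lemma not_min_A {f f' : ℝ → ℝ} {z d : ℝ} (hf : ∀ x, HasDerivAt f (f' x) x)
    (hz1 : f' z = 0) (hd : HasDerivAt f' d z) (hneg : d < 0) :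
    ¬ IsMinOn f Set.univ z := by
  intro hmin
  have hmono : 𝓝[>] z ≤ 𝓝[≠] z :=
    nhdsWithin_mono z (fun w hw => Set.mem_compl_singleton_iff.mpr (ne_of_gt hw))
  have hslope : Filter.Tendsto (slope f' z) (𝓝[>] z) (𝓝 d) :=
    (hasDerivAt_iff_tendsto_slope.mp hd).mono_left hmono
  have hev : ∀ᶠ w in 𝓝[>] z, slope f' z w < 0 := hslope.eventually_lt_const hneg
  have hev2 : ∀ᶠ w in 𝓝[>] z, f' w < 0 := by
    filter_upwards [hev, self_mem_nhdsWithin] with w hw hw2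
    rw [slope_def_field, hz1, sub_zero] at hw
    have hwz : (0:ℝ) < w - z := sub_pos.mpr hw2
    have := mul_neg_of_neg_of_pos hw hwz
    rwa [div_mul_cancel₀ _ hwz.ne'] at this
  obtain ⟨u, hu, hsub⟩ := mem_nhdsGT_iff_exists_Ioo_subset.mp hev2
  have hu' : z < u := hu
  set y := (z + u) / 2 with hy
  have hzy : z < y := by rw [hy]; linarith
  have hyu : y < u := by rw [hy]; linarith
  have hanti : StrictAntiOn f (Set.Icc z y) := by
    apply strictAntiOn_of_deriv_neg (convex_Icc z y)
    · exact fun x _ => (hf x).continuousAt.continuousWithinAt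
    · intro x hx
      rw [interior_Icc] at hx
      rw [(hf x).deriv]
      exact hsub ⟨hx.1, lt_trans hx.2 hyu⟩
  have hlt : f y < f z :=
    hanti (Set.left_mem_Icc.mpr hzy.le) (Set.right_mem_Icc.mpr hzy.le) hzy
  exact absurd (isMinOn_iff.mp hmin y (Set.mem_univ y)) (not_le.mpr hlt)

/-- If `f' z = f'' z = 0` and `f''` has nonzero derivative at `z`, `z` is not a global min. -/
lemma not_min_B {f f' f'' : ℝ → ℝ} {z d : ℝ} (hf : ∀ x, HasDerivAt f (f' x) x)
    (hf' : ∀ x, HasDerivAt f' (f'' x) x) (hz1 : f' z = 0) (hz2 : f'' z = 0)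
    (hd : HasDerivAt f'' d z) (hne : d ≠ 0) : ¬ IsMinOn f Set.univ z := by
  intro hmin
  rcases hne.lt_or_gt with hneg | hpos
  · -- d < 0 : f'' < 0 just right of z, so f' < 0 there, so f decreasing, contradiction
    have hmono : 𝓝[>] z ≤ 𝓝[≠] z :=
      nhdsWithin_mono z (fun w hw => Set.mem_compl_singleton_iff.mpr (ne_of_gt hw))
    have hslope : Filter.Tendsto (slope f'' z) (𝓝[>] z) (𝓝 d) :=
      (hasDerivAt_iff_tendsto_slope.mp hd).mono_left hmono
    have hev : ∀ᶠ w in 𝓝[>] z, slope f'' z w < 0 := hslope.eventually_lt_const hneg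
    have hev2 : ∀ᶠ w in 𝓝[>] z, f'' w < 0 := by
      filter_upwards [hev, self_mem_nhdsWithin] with w hw hw2
      rw [slope_def_field, hz2, sub_zero] at hw
      have hwz : (0:ℝ) < w - z := sub_pos.mpr hw2
      have := mul_neg_of_neg_of_pos hw hwz
      rwa [div_mul_cancel₀ _ hwz.ne'] at this
    obtain ⟨u, hu, hsub⟩ := mem_nhdsGT_iff_exists_Ioo_subset.mp hev2
    have hu' : z < u := hu
    set y := (z + u) / 2 with hy
    have hzy : z < y := by rw [hy]; linarith
    have hyu : y < u := by rw [hy]; linarith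
    have hanti' : StrictAntiOn f' (Set.Icc z y) := by
      apply strictAntiOn_of_deriv_neg (convex_Icc z y)
      · exact fun x _ => (hf' x).continuousAt.continuousWithinAt
      · intro x hx
        rw [interior_Icc] at hx
        rw [(hf' x).deriv]
        exact hsub ⟨hx.1, lt_trans hx.2 hyu⟩
    have hanti : StrictAntiOn f (Set.Icc z y) := by
      apply strictAntiOn_of_deriv_neg (convex_Icc z y)
      · exact fun x _ => (hf x).continuousAt.continuousWithinAt
      · intro x hx
        rw [interior_Icc] at hx
        rw [(hf x).deriv]
        have := hanti' (Set.left_mem_Icc.mpr hzy.le) ⟨hx.1.le, hx.2.le⟩ hx.1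
        rw [hz1] at this
        exact this
    have hlt : f y < f z :=
      hanti (Set.left_mem_Icc.mpr hzy.le) (Set.right_mem_Icc.mpr hzy.le) hzy
    exact absurd (isMinOn_iff.mp hmin y (Set.mem_univ y)) (not_le.mpr hlt)
  · -- d > 0 : f'' < 0 just left of z, so f' > 0 there, so f increasing up to z, contradiction
    have hmono : 𝓝[<] z ≤ 𝓝[≠] z :=
      nhdsWithin_mono z (fun w hw => Set.mem_compl_singleton_iff.mpr (ne_of_lt hw))
    have hslope : Filter.Tendsto (slope f'' z) (𝓝[<] z) (𝓝 d) :=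
      (hasDerivAt_iff_tendsto_slope.mp hd).mono_left hmono
    have hev : ∀ᶠ w in 𝓝[<] z, 0 < slope f'' z w := hslope.eventually_const_lt hpos
    have hev2 : ∀ᶠ w in 𝓝[<] z, f'' w < 0 := by
      filter_upwards [hev, self_mem_nhdsWithin] with w hw hw2
      rw [slope_def_field, hz2, sub_zero] at hw
      have hwz : w - z < 0 := sub_neg.mpr hw2
      have := mul_neg_of_pos_of_neg hw hwz
      rw [div_mul_cancel₀ _ hwz.ne] at this
      exact this
    obtain ⟨u, hu, hsub⟩ := mem_nhdsLT_iff_exists_Ioo_subset.mp hev2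
    have hu' : u < z := hu
    set y := (u + z) / 2 with hy
    have hzy : y < z := by rw [hy]; linarith
    have hyu : u < y := by rw [hy]; linarith
    have hanti' : StrictAntiOn f' (Set.Icc y z) := by
      apply strictAntiOn_of_deriv_neg (convex_Icc y z)
      · exact fun x _ => (hf' x).continuousAt.continuousWithinAt
      · intro x hx
        rw [interior_Icc] at hx
        rw [(hf' x).deriv]
        exact hsub ⟨lt_trans hyu hx.1, hx.2⟩
    have hmono' : StrictMonoOn f (Set.Icc y z) := by
      apply strictMonoOn_of_deriv_pos (convex_Icc y z)
      · exact fun x _ => (hf x).continuousAt.continuousWithinAt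
      · intro x hx
        rw [interior_Icc] at hx
        rw [(hf x).deriv]
        have := hanti' ⟨hx.1.le, hx.2.le⟩ (Set.right_mem_Icc.mpr hzy.le) hx.2
        rw [hz1] at this
        exact this
    have hlt : f y < f z :=
      hmono' (Set.left_mem_Icc.mpr hzy.le) (Set.right_mem_Icc.mpr hzy.le) hzy
    exact absurd (isMinOn_iff.mp hmin y (Set.mem_univ y)) (not_le.mpr hlt)

/-- The third derivative of `c_β` is nonzero away from `0` when `1/4 ≤ a`. -/
lemma c3f_ne {a : ℝ} (ha : 0 < a) (ha4 : 1 / 4 ≤ a) {t : ℝ} (hx1 : Real.exp t ≠ 1) :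
    c3f a t ≠ 0 := by
  simp only [c3f]
  have hxpos : (0:ℝ) < Real.exp t := Real.exp_pos t
  set x := Real.exp t with hxdef
  have hnum : (-1) * a ^ 1 * x ^ 2 + 1 * a ^ 1 * x ^ 4 + 1 * a ^ 2 * x ^ 1
      + (-1) * a ^ 2 * x ^ 5 + 8 * a ^ 3 * x ^ 2 + (-8) * a ^ 3 * x ^ 4
      = (-a) * x * (x ^ 2 - 1) * (a * (x - 1) ^ 2 + x * ((4 * a - 1) * (2 * a + 1))) := by
    ring
  rw [hnum]
  apply div_ne_zero
  · apply mul_ne_zero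
    apply mul_ne_zero
    apply mul_ne_zero
    · exact neg_ne_zero.mpr ha.ne'
    · exact hxpos.ne'
    · intro h
      have h2 : (x - 1) * (x + 1) = 0 := by linarith [h, sq_nonneg x]
      rcases mul_eq_zero.mp h2 with h3 | h3
      · exact hx1 (by linarith)
      · linarith
    · have h1 : 0 < a * (x - 1) ^ 2 := by
        apply mul_pos ha
        apply pow_two_pos_of_ne_zero
        exact sub_ne_zero.mpr hx1
      have h2 : 0 ≤ x * ((4 * a - 1) * (2 * a + 1)) :=
        mul_nonneg hxpos.le (mul_nonneg (by linarith) (by linarith))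
      exact (by linarith : (0:ℝ) < a * (x - 1) ^ 2 + x * ((4 * a - 1) * (2 * a + 1))).ne'
  · positivity

/-- Fix `0 < β ≤ log 4` and
`K_c^{(2)}(β) = 1/(4βe^{−β}) + 1/(2β) = 1/(2β c_β''(0))`.  Then:
(a) for `0 < K < K_c^{(2)}(β)`, `G_{β,K}''(0) = 2βK(1 − K/K_c^{(2)}(β)) > 0`;
(b) for `K = K_c^{(2)}(β)`: `G_{β,K}''(0) = 0`; if `β < log 4` then
`G_{β,K}⁽⁴⁾(0) = −(2βK)⁴ c_β⁽⁴⁾(0) > 0`, while if `β = log 4` then `G_{β,K}⁽⁴⁾(0) = 0`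
and `G_{β,K}⁽⁶⁾(0) = 2(2βK)⁶/9 > 0`;
(c) for `K > K_c^{(2)}(β)`, every nonzero global minimum point `z` of `G_{β,K}`
satisfies `G_{β,K}''(z) > 0`. -/
theorem Gfun_minimum_types_second_order (β : ℝ) (hβ0 : 0 < β) (hβ : β ≤ Real.log 4) :
    Kc2 β = 1 / (2 * β * iteratedDeriv 2 (cBeta β) 0) ∧
    (∀ K : ℝ, 0 < K → K < Kc2 β →
      iteratedDeriv 2 (Gfun β K) 0 = 2 * β * K * (1 - K / Kc2 β) ∧
      0 < iteratedDeriv 2 (Gfun β K) 0) ∧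
    (iteratedDeriv 2 (Gfun β (Kc2 β)) 0 = 0 ∧
      (β < Real.log 4 →
        iteratedDeriv 4 (Gfun β (Kc2 β)) 0 =
          -(2 * β * Kc2 β) ^ 4 * iteratedDeriv 4 (cBeta β) 0 ∧
        0 < iteratedDeriv 4 (Gfun β (Kc2 β)) 0) ∧
      (β = Real.log 4 →
        iteratedDeriv 4 (Gfun β (Kc2 β)) 0 = 0 ∧
        iteratedDeriv 6 (Gfun β (Kc2 β)) 0 = 2 * (2 * β * Kc2 β) ^ 6 / 9 ∧
        0 < iteratedDeriv 6 (Gfun β (Kc2 β)) 0)) ∧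
    (∀ K : ℝ, Kc2 β < K → ∀ z : ℝ, z ≠ 0 → IsMinOn (Gfun β K) Set.univ z →
      0 < iteratedDeriv 2 (Gfun β K) z) := by
  have ha : (0:ℝ) < Real.exp (-β) := Real.exp_pos _
  have h2a : (0:ℝ) < 1 + 2 * Real.exp (-β) := by positivity
  have hlog4 : Real.exp (-Real.log 4) = 1 / 4 := by
    rw [Real.exp_neg, Real.exp_log (by norm_num : (0:ℝ) < 4)]
    norm_num
  have ha4 : (1:ℝ) / 4 ≤ Real.exp (-β) := by
    rw [← hlog4]; exact Real.exp_le_exp.mpr (by linarith)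
  have hKc2 : Kc2 β = (1 + 2 * Real.exp (-β)) / (4 * Real.exp (-β) * β) := by
    unfold Kc2
    field_simp
    ring
  have hKc2pos : 0 < Kc2 β := by rw [hKc2]; positivity
  have hc20 : c2f (Real.exp (-β)) 0
      = 2 * Real.exp (-β) / (1 + 2 * Real.exp (-β)) := by
    simp only [c2f, Real.exp_zero, one_pow, mul_one]
    rw [div_eq_div_iff (by positivity) (by positivity)]
    ring
  refine ⟨?_, ?_, ⟨?_, ?_, ?_⟩, ?_⟩
  · -- Kc2 = 1/(2β c''(0))
    rw [icb2]
    show Kc2 β = 1 / (2 * β * c2f (Real.exp (-β)) 0)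
    rw [hc20, hKc2]
    rw [eq_div_iff (by positivity)]
    field_simp
    ring
  · -- part (a)
    intro K hK0 hKlt
    have hval : iteratedDeriv 2 (Gfun β K) 0 = 2 * β * K * (1 - K / Kc2 β) := by
      rw [iG2]
      show g2f β K 0 = _
      simp only [g2f, mul_zero]
      rw [hc20, hKc2]
      field_simp
      ring
    refine ⟨hval, ?_⟩
    rw [hval]
    have h1 : 0 < 2 * β * K := mul_pos (by linarith) hK0
    have h2 : K / Kc2 β < 1 := (div_lt_one hKc2pos).mpr hKlt
    exact mul_pos h1 (by linarith)
  · -- part (b), second derivative vanishes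
    rw [iG2]
    show g2f β (Kc2 β) 0 = 0
    simp only [g2f, mul_zero]
    rw [hc20, hKc2]
    field_simp
    ring
  · -- part (b), fourth derivative, β < log 4
    intro hβlt
    have ha4' : (1:ℝ) / 4 < Real.exp (-β) := by
      rw [← hlog4]; exact Real.exp_lt_exp.mpr (by linarith)
    have heq : iteratedDeriv 4 (Gfun β (Kc2 β)) 0
        = -(2 * β * Kc2 β) ^ 4 * iteratedDeriv 4 (cBeta β) 0 := by
      rw [iG4, icb4]
      show g4f β (Kc2 β) 0 = -(2 * β * Kc2 β) ^ 4 * c4f (Real.exp (-β)) 0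
      simp only [g4f, mul_zero]
    refine ⟨heq, ?_⟩
    rw [heq, icb4]
    show 0 < -(2 * β * Kc2 β) ^ 4 * c4f (Real.exp (-β)) 0
    have hc40 : c4f (Real.exp (-β)) 0
        = 2 * Real.exp (-β) * (1 - 4 * Real.exp (-β)) / (1 + 2 * Real.exp (-β)) ^ 2 := by
      simp only [c4f, Real.exp_zero, one_pow, mul_one]
      rw [div_eq_div_iff (by positivity) (by positivity)]
      ring
    have hm : 0 < 2 * β * Kc2 β := mul_pos (by linarith) hKc2pos
    apply mul_pos_of_neg_of_neg
    · have := pow_pos hm 4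
      linarith
    · rw [hc40]
      apply div_neg_of_neg_of_pos
      · exact mul_neg_of_pos_of_neg (by linarith) (by linarith)
      · positivity
  · -- part (b), β = log 4
    intro hβeq
    have ha14 : Real.exp (-β) = 1 / 4 := by rw [hβeq]; exact hlog4
    have hm : 0 < 2 * β * Kc2 β := mul_pos (by linarith) hKc2pos
    have hc40z : c4f (Real.exp (-β)) 0 = 0 := by
      rw [ha14]
      simp only [c4f, Real.exp_zero]
      norm_num
    have hc60 : c6f (Real.exp (-β)) 0 = -(2 / 9) := by
      rw [ha14]
      simp only [c6f, Real.exp_zero]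
      norm_num
    refine ⟨?_, ?_, ?_⟩
    · rw [iG4]
      show g4f β (Kc2 β) 0 = 0
      simp only [g4f, mul_zero, hc40z, mul_zero]
    · rw [iG6]
      show g6f β (Kc2 β) 0 = 2 * (2 * β * Kc2 β) ^ 6 / 9
      simp only [g6f, mul_zero, hc60]
      ring
    · rw [iG6]
      show 0 < g6f β (Kc2 β) 0
      simp only [g6f, mul_zero, hc60]
      nlinarith [pow_pos hm 6]
  · -- part (c)
    intro K hKgt z hz hmin
    have hK0 : 0 < K := lt_trans hKc2pos hKgt
    have hm : 0 < 2 * β * K := mul_pos (by linarith) hK0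
    have hloc : IsLocalMin (Gfun β K) z := hmin.isLocalMin Filter.univ_mem
    have hG'0 : g1f β K z = 0 := hloc.hasDerivAt_eq_zero (hG0 β K z)
    rw [iG2]
    show 0 < g2f β K z
    rcases lt_trichotomy (g2f β K z) 0 with hlt | heq0 | hgt
    · exact absurd hmin (not_min_A (hG0 β K) hG'0 (hG1 β K z) hlt)
    · exfalso
      have h3ne : g3f β K z ≠ 0 := by
        simp only [g3f]
        apply mul_ne_zero
        · exact neg_ne_zero.mpr (pow_ne_zero 3 hm.ne')
        · apply c3f_ne (Real.exp_pos _) ha4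
          intro h
          rw [show (1:ℝ) = Real.exp 0 by simp] at h
          have h0 := Real.exp_eq_exp.mp h
          rcases mul_eq_zero.mp h0 with h1 | h1
          · exact hm.ne' h1
          · exact hz h1
      exact (not_min_B (hG0 β K) (hG1 β K) hG'0 heq0 (hG2 β K z) h3ne) hmin
    · exact hgt
end
end

section
/- Fix β > log 4 and K > 0. Then every global minimum point z of G_{β,K} over ℝ satisfies G_{β,K}''(z) > 0; in particular, whenever 0 is a global minimum point of G_{β,K}, G_{β,K}''(0) > 0, and every nonzero global minimum point z satisfies G_{β,K}''(z) > 0. -/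
noncomputable section

open Real Set

/-- denominator `D(t) = 1 + s(e^t + e^{-t})` -/
def Dfun (s t : ℝ) : ℝ := 1 + s * (Real.exp t + Real.exp (-t))
def cfun (s t : ℝ) : ℝ := Real.log (Dfun s t / (1 + 2 * s))
def c1 (s t : ℝ) : ℝ := s * (Real.exp t - Real.exp (-t)) / Dfun s t
def c2 (s t : ℝ) : ℝ := (s * (Real.exp t + Real.exp (-t)) + 4 * s ^ 2) / (Dfun s t) ^ 2
def c3 (s t : ℝ) : ℝ :=
  s * (Real.exp t - Real.exp (-t)) * (1 - s * (Real.exp t + Real.exp (-t)) - 8 * s ^ 2)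
    / (Dfun s t) ^ 3

lemma Dfun_pos {s : ℝ} (hs : 0 < s) (t : ℝ) : 0 < Dfun s t := by
  have := Real.exp_pos t; have := Real.exp_pos (-t)
  unfold Dfun; nlinarith

lemma Dfun_ne {s : ℝ} (hs : 0 < s) (t : ℝ) : Dfun s t ≠ 0 := (Dfun_pos hs t).ne'

lemma hasDerivAt_Dfun (s t : ℝ) :
    HasDerivAt (Dfun s) (s * (Real.exp t - Real.exp (-t))) t := by
  have h1 : HasDerivAt Real.exp (Real.exp t) t := Real.hasDerivAt_exp t
  have h2 : HasDerivAt (fun u : ℝ => Real.exp (-u)) (-Real.exp (-t)) t := by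
    exact ((Real.hasDerivAt_exp (-t)).comp t (hasDerivAt_neg t)).congr_deriv (by ring)
  have := ((h1.add h2).const_mul s).const_add 1
  refine this.congr_deriv (Eq.symm ?_)
  try ring

lemma hasDerivAt_cfun {s : ℝ} (hs : 0 < s) (t : ℝ) :
    HasDerivAt (cfun s) (c1 s t) t := by
  have h2s : (0:ℝ) < 1 + 2 * s := by linarith
  have hD := Dfun_pos hs t
  have h := ((hasDerivAt_Dfun s t).div_const (1 + 2*s)).log
    (ne_of_gt (div_pos hD h2s))
  refine h.congr_deriv (Eq.symm ?_)
  unfold c1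
  field_simp

lemma exp_mul_exp_neg (t : ℝ) : Real.exp t * Real.exp (-t) = 1 := by
  rw [← Real.exp_add]; simp

lemma hasDerivAt_c1 {s : ℝ} (hs : 0 < s) (t : ℝ) :
    HasDerivAt (c1 s) (c2 s t) t := by
  have hN : HasDerivAt (fun u => s * (Real.exp u - Real.exp (-u)))
      (s * (Real.exp t + Real.exp (-t))) t := by
    have h1 : HasDerivAt Real.exp (Real.exp t) t := Real.hasDerivAt_exp t
    have h2 : HasDerivAt (fun u : ℝ => Real.exp (-u)) (-Real.exp (-t)) t := by
      exact ((Real.hasDerivAt_exp (-t)).comp t (hasDerivAt_neg t)).congr_deriv (by ring)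
    have := (h1.sub h2).const_mul s
    refine this.congr_deriv (Eq.symm ?_); ring
  have h := hN.div (hasDerivAt_Dfun s t) (Dfun_ne hs t)
  refine h.congr_deriv (Eq.symm ?_)
  unfold c2
  have hnum : s * (Real.exp t + Real.exp (-t)) + 4 * s ^ 2
      = s * (Real.exp t + Real.exp (-t)) * Dfun s t
        - s * (Real.exp t - Real.exp (-t)) * (s * (Real.exp t - Real.exp (-t))) := by
    unfold Dfun; linear_combination (-4*s^2) * exp_mul_exp_neg t
  rw [hnum]

lemma hasDerivAt_c2 {s : ℝ} (hs : 0 < s) (t : ℝ) :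
    HasDerivAt (c2 s) (c3 s t) t := by
  have hN : HasDerivAt (fun u => s * (Real.exp u + Real.exp (-u)) + 4 * s ^ 2)
      (s * (Real.exp t - Real.exp (-t))) t := by
    have := (hasDerivAt_Dfun s t).add_const (4 * s ^ 2 - 1)
    refine this.congr_of_eventuallyEq (Filter.Eventually.of_forall fun u => ?_)
    unfold Dfun; ring
  have hDsq : HasDerivAt (fun u => (Dfun s u) ^ 2)
      (2 * Dfun s t * (s * (Real.exp t - Real.exp (-t)))) t := by
    have := ((hasDerivAt_Dfun s t).pow 2)
    refine this.congr_deriv (Eq.symm ?_); ring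
  have h := hN.div hDsq (pow_ne_zero 2 (Dfun_ne hs t))
  refine h.congr_deriv (Eq.symm ?_)
  unfold c3
  rw [div_eq_div_iff (pow_ne_zero 3 (Dfun_ne hs t)) (pow_ne_zero 2 (pow_ne_zero 2 (Dfun_ne hs t)))]
  unfold Dfun
  ring

def phiF (s t : ℝ) : ℝ := t * c2 s t - c1 s t
def Ff (s t : ℝ) : ℝ := t * c1 s t / 2 - cfun s t

lemma hasDerivAt_phiF {s : ℝ} (hs : 0 < s) (t : ℝ) :
    HasDerivAt (phiF s) (t * c3 s t) t := by
  have h := ((hasDerivAt_id t).mul (hasDerivAt_c2 hs t)).sub (hasDerivAt_c1 hs t)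
  refine h.congr_deriv (Eq.symm ?_)
  simp only [id_eq, one_mul]
  ring

lemma hasDerivAt_Ff {s : ℝ} (hs : 0 < s) (t : ℝ) :
    HasDerivAt (Ff s) (phiF s t / 2) t := by
  have h := ((((hasDerivAt_id t).mul (hasDerivAt_c1 hs t)).div_const 2).sub
    (hasDerivAt_cfun hs t))
  refine h.congr_deriv (Eq.symm ?_)
  unfold phiF
  simp only [id_eq, one_mul]
  ring

lemma cfun_zero {s : ℝ} (hs : 0 < s) : cfun s 0 = 0 := by
  have : Dfun s 0 = 1 + 2 * s := by unfold Dfun; simp; ring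
  unfold cfun
  rw [this, div_self (by linarith), Real.log_one]

lemma c1_zero (s : ℝ) : c1 s 0 = 0 := by unfold c1; simp

lemma c1_pos {s : ℝ} (hs : 0 < s) {t : ℝ} (ht : 0 < t) : 0 < c1 s t := by
  have : Real.exp (-t) < Real.exp t := Real.exp_lt_exp.2 (by linarith)
  exact div_pos (by nlinarith) (Dfun_pos hs t)

lemma Dfun_even (s t : ℝ) : Dfun s (-t) = Dfun s t := by
  unfold Dfun; rw [neg_neg]; ring

lemma cfun_even (s t : ℝ) : cfun s (-t) = cfun s t := by
  unfold cfun; rw [Dfun_even]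

lemma c1_odd (s t : ℝ) : c1 s (-t) = -c1 s t := by
  unfold c1; rw [Dfun_even, neg_neg, ← neg_div]; ring_nf

lemma c2_even (s t : ℝ) : c2 s (-t) = c2 s t := by
  unfold c2; rw [Dfun_even, neg_neg]; ring_nf

lemma c3_pos {s : ℝ} (hs : 0 < s) {t : ℝ} (ht : 0 < t)
    (hD : Dfun s t < 2 - 8 * s ^ 2) : 0 < c3 s t := by
  have h1 : Real.exp (-t) < Real.exp t := Real.exp_lt_exp.2 (by linarith)
  have h2 : 0 < 1 - s * (Real.exp t + Real.exp (-t)) - 8 * s ^ 2 := by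
    unfold Dfun at hD; nlinarith
  have h3 : 0 < s * (Real.exp t - Real.exp (-t)) := by nlinarith
  exact div_pos (mul_pos h3 h2) (pow_pos (Dfun_pos hs t) 3)

lemma c3_neg {s : ℝ} (hs : 0 < s) {t : ℝ} (ht : 0 < t)
    (hD : 2 - 8 * s ^ 2 < Dfun s t) : c3 s t < 0 := by
  have h1 : Real.exp (-t) < Real.exp t := Real.exp_lt_exp.2 (by linarith)
  have h2 : 1 - s * (Real.exp t + Real.exp (-t)) - 8 * s ^ 2 < 0 := by
    unfold Dfun at hD; nlinarith
  have h3 : 0 < s * (Real.exp t - Real.exp (-t)) := by nlinarith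
  exact div_neg_of_neg_of_pos (mul_neg_of_pos_of_neg h3 h2) (pow_pos (Dfun_pos hs t) 3)

lemma Dfun_strictMono {s : ℝ} (hs : 0 < s) : StrictMonoOn (Dfun s) (Set.Ici 0) := by
  apply strictMonoOn_of_deriv_pos (convex_Ici 0)
  · exact (Continuous.continuousOn (by
      exact continuous_iff_continuousAt.2 fun x => (hasDerivAt_Dfun s x).continuousAt))
  · intro x hx
    rw [interior_Ici] at hx
    rw [(hasDerivAt_Dfun s x).deriv]
    have : Real.exp (-x) < Real.exp x := Real.exp_lt_exp.2 (by linarith [hx.out])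
    nlinarith [hx.out]

lemma Dfun_zero_lt {s : ℝ} (hs : 0 < s) (hs4 : s < 1/4) :
    Dfun s 0 < 2 - 8 * s ^ 2 := by
  have : Dfun s 0 = 1 + 2 * s := by unfold Dfun; simp; ring
  rw [this]; nlinarith

lemma phiF_zero (s : ℝ) : phiF s 0 = 0 := by unfold phiF; simp [c1_zero]

lemma Ff_zero {s : ℝ} (hs : 0 < s) : Ff s 0 = 0 := by
  unfold Ff; simp [c1_zero, cfun_zero hs]

lemma continuous_Dfun (s : ℝ) : Continuous (Dfun s) :=
  continuous_iff_continuousAt.2 fun x => (hasDerivAt_Dfun s x).continuousAt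

lemma continuous_c2 {s : ℝ} (hs : 0 < s) : Continuous (c2 s) :=
  continuous_iff_continuousAt.2 fun x =>
    (hasDerivAt_c2 hs x).differentiableAt.continuousAt

lemma continuous_phiF {s : ℝ} (hs : 0 < s) : Continuous (phiF s) :=
  continuous_iff_continuousAt.2 fun x =>
    (hasDerivAt_phiF hs x).differentiableAt.continuousAt

lemma continuous_Ff {s : ℝ} (hs : 0 < s) : Continuous (Ff s) :=
  continuous_iff_continuousAt.2 fun x =>
    (hasDerivAt_Ff hs x).differentiableAt.continuousAt

lemma phiF_mono {s : ℝ} (hs : 0 < s) {q : ℝ} (hq : 0 < q)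
    (hD : Dfun s q ≤ 2 - 8 * s ^ 2) : StrictMonoOn (phiF s) (Set.Icc 0 q) := by
  apply strictMonoOn_of_deriv_pos (convex_Icc 0 q) ((continuous_phiF hs).continuousOn)
  intro x hx
  rw [interior_Icc] at hx
  rw [(hasDerivAt_phiF hs x).deriv]
  have hx0 : 0 < x := hx.1
  have hlt : Dfun s x < Dfun s q :=
    Dfun_strictMono hs (le_of_lt hx0) (le_of_lt hq) hx.2
  exact mul_pos hx0 (c3_pos hs hx0 (lt_of_lt_of_le hlt hD))

lemma phiF_pos {s : ℝ} (hs : 0 < s) {q : ℝ} (hq : 0 < q)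
    (hD : Dfun s q ≤ 2 - 8 * s ^ 2) {x : ℝ} (hx : x ∈ Set.Ioc 0 q) :
    0 < phiF s x := by
  have := phiF_mono hs hq hD (Set.left_mem_Icc.2 (le_of_lt hq))
    ⟨le_of_lt hx.1, hx.2⟩ hx.1
  rwa [phiF_zero] at this

lemma Ff_pos {s : ℝ} (hs : 0 < s) {q : ℝ} (hq : 0 < q)
    (hD : Dfun s q ≤ 2 - 8 * s ^ 2) : 0 < Ff s q := by
  have hmono : StrictMonoOn (Ff s) (Set.Icc 0 q) := by
    apply strictMonoOn_of_deriv_pos (convex_Icc 0 q) ((continuous_Ff hs).continuousOn)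
    intro x hx
    rw [interior_Icc] at hx
    rw [(hasDerivAt_Ff hs x).deriv]
    have := phiF_pos hs hq hD ⟨hx.1, le_of_lt hx.2⟩
    linarith
  have := hmono (Set.left_mem_Icc.2 (le_of_lt hq))
    (Set.right_mem_Icc.2 (le_of_lt hq)) hq
  rwa [Ff_zero hs] at this

lemma phiF_anti {s : ℝ} (hs : 0 < s) {a q : ℝ} (ha : 0 < a) (haq : a < q)
    (hDa : 2 - 8 * s ^ 2 ≤ Dfun s a) : StrictAntiOn (phiF s) (Set.Icc a q) := by
  apply strictAntiOn_of_deriv_neg (convex_Icc a q) ((continuous_phiF hs).continuousOn)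
  intro x hx
  rw [interior_Icc] at hx
  rw [(hasDerivAt_phiF hs x).deriv]
  have hx0 : 0 < x := lt_trans ha hx.1
  have hlt : Dfun s a < Dfun s x :=
    Dfun_strictMono hs (le_of_lt ha) (le_of_lt hx0) hx.1
  exact mul_neg_of_pos_of_neg hx0 (c3_neg hs hx0 (lt_of_le_of_lt hDa hlt))

lemma keyC {s : ℝ} (hs : 0 < s) (hs4 : s < 1/4) {t : ℝ} (ht : 0 < t)
    (hle : Ff s t ≤ 0) : phiF s t < 0 := by
  by_contra hcon
  push_neg at hcon
  have hR0 : Dfun s 0 < 2 - 8 * s ^ 2 := Dfun_zero_lt hs hs4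
  rcases le_or_gt (Dfun s t) (2 - 8 * s ^ 2) with hc | hc
  · have := Ff_pos hs ht hc; linarith
  · obtain ⟨a, ha, hDa⟩ := intermediate_value_Ioo (le_of_lt ht)
      ((continuous_Dfun s).continuousOn) (Set.mem_Ioo.2 ⟨hR0, hc⟩)
    have hFa : 0 < Ff s a := Ff_pos hs ha.1 (le_of_eq hDa)
    have hanti : StrictAntiOn (phiF s) (Set.Icc a t) := phiF_anti hs ha.1 ha.2 (ge_of_eq hDa)
    have hmono : MonotoneOn (Ff s) (Set.Icc a t) := by
      apply monotoneOn_of_deriv_nonneg (convex_Icc a t) ((continuous_Ff hs).continuousOn)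
        (fun x hx => (hasDerivAt_Ff hs x).differentiableAt.differentiableWithinAt)
      intro x hx
      rw [interior_Icc] at hx
      rw [(hasDerivAt_Ff hs x).deriv]
      have : phiF s t < phiF s x :=
        hanti ⟨le_of_lt hx.1, le_of_lt hx.2⟩
          (Set.right_mem_Icc.2 (le_of_lt ha.2)) hx.2
      linarith
    have : Ff s a ≤ Ff s t :=
      hmono (Set.left_mem_Icc.2 (le_of_lt ha.2))
        (Set.right_mem_Icc.2 (le_of_lt ha.2)) (le_of_lt ha.2)
    linarith

lemma keyB {s : ℝ} (hs : 0 < s) (hs4 : s < 1/4) :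
    ∃ t : ℝ, 0 < t ∧ c2 s 0 * t ^ 2 / 2 < cfun s t := by
  have hnum : 2 * s < 1 - 8 * s ^ 2 := by nlinarith
  set r : ℝ := (1 - 8 * s ^ 2) / s - 1 with hr
  have hr1 : 1 < r := by
    rw [hr, lt_sub_iff_add_lt, lt_div_iff₀ hs]; nlinarith
  set t1 := Real.log r with ht1def
  have ht1 : 0 < t1 := Real.log_pos hr1
  have hexp : Real.exp t1 = r := Real.exp_log (by linarith)
  have hDt1 : Dfun s t1 < 2 - 8 * s ^ 2 := by
    unfold Dfun
    have h2 : Real.exp (-t1) < 1 := by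
      rw [Real.exp_neg, hexp]; exact inv_lt_one_of_one_lt₀ hr1
    rw [hexp]
    have hsr : s * r = 1 - 8 * s ^ 2 - s := by rw [hr]; field_simp
    nlinarith
  have hc2mono : StrictMonoOn (c2 s) (Set.Icc 0 t1) := by
    apply strictMonoOn_of_deriv_pos (convex_Icc 0 t1) ((continuous_c2 hs).continuousOn)
    intro x hx
    rw [interior_Icc] at hx
    rw [(hasDerivAt_c2 hs x).deriv]
    have hlt : Dfun s x < Dfun s t1 :=
      Dfun_strictMono hs (le_of_lt hx.1) (le_of_lt ht1) hx.2
    exact c3_pos hs hx.1 (lt_trans hlt hDt1)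
  have hKpos : ∀ x ∈ Set.Ioo 0 t1, 0 < c1 s x - c2 s 0 * x := by
    intro x hx
    have hKmono : StrictMonoOn (fun y => c1 s y - c2 s 0 * y) (Set.Icc 0 x) := by
      apply strictMonoOn_of_deriv_pos (convex_Icc 0 x)
      · apply Continuous.continuousOn
        apply Continuous.sub
        · exact continuous_iff_continuousAt.2 fun y =>
            (hasDerivAt_c1 hs y).differentiableAt.continuousAt
        · exact continuous_const.mul continuous_id
      intro y hy
      rw [interior_Icc] at hy
      have hd : HasDerivAt (fun y => c1 s y - c2 s 0 * y) (c2 s y - c2 s 0) y := by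
        have := (hasDerivAt_c1 hs y).sub ((hasDerivAt_id y).const_mul (c2 s 0))
        refine this.congr_deriv (Eq.symm ?_); simp [id]
      rw [hd.deriv]
      have : c2 s 0 < c2 s y :=
        hc2mono (Set.left_mem_Icc.2 (le_of_lt ht1))
          ⟨le_of_lt hy.1, le_of_lt (lt_of_lt_of_le hy.2 (le_of_lt hx.2))⟩ hy.1
      linarith
    have := hKmono (Set.left_mem_Icc.2 (le_of_lt hx.1))
      (Set.right_mem_Icc.2 (le_of_lt hx.1)) hx.1
    simpa [c1_zero] using this
  have hHmono : StrictMonoOn (fun y => cfun s y - c2 s 0 * y ^ 2 / 2) (Set.Icc 0 t1) := by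
    apply strictMonoOn_of_deriv_pos (convex_Icc 0 t1)
    · apply Continuous.continuousOn
      apply Continuous.sub
      · exact continuous_iff_continuousAt.2 fun y =>
          (hasDerivAt_cfun hs y).differentiableAt.continuousAt
      · exact (continuous_const.mul (continuous_pow 2)).div_const 2
    intro y hy
    rw [interior_Icc] at hy
    have hd : HasDerivAt (fun y => cfun s y - c2 s 0 * y ^ 2 / 2)
        (c1 s y - c2 s 0 * y) y := by
      have := (hasDerivAt_cfun hs y).sub
        (((hasDerivAt_pow 2 y).const_mul (c2 s 0)).div_const 2)
      refine this.congr_deriv (Eq.symm ?_); ring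
    rw [hd.deriv]
    exact hKpos y hy
  have h := hHmono (Set.left_mem_Icc.2 (le_of_lt ht1))
    (Set.right_mem_Icc.2 (le_of_lt ht1)) ht1
  simp only [cfun_zero hs] at h
  exact ⟨t1, ht1, by linarith⟩

lemma cBeta_eq_s15 (β t : ℝ) : cBeta β t = cfun (Real.exp (-β)) t := rfl

lemma Gfun_eq (β K z : ℝ) :
    Gfun β K z = (2 * β * K) * z ^ 2 / 2 - cfun (Real.exp (-β)) (2 * β * K * z) := by
  rw [Gfun, cBeta_eq_s15]; ring

lemma hasDerivAt_G (β K z : ℝ) :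
    HasDerivAt (Gfun β K)
      (2 * β * K * z - 2 * β * K * c1 (Real.exp (-β)) (2 * β * K * z)) z := by
  have hs : 0 < Real.exp (-β) := Real.exp_pos _
  have h1 : HasDerivAt (fun z : ℝ => β * K * z ^ 2) (β * K * (2 * z ^ 1)) z :=
    (hasDerivAt_pow 2 z).const_mul (β * K)
  have hinner : HasDerivAt (fun z : ℝ => 2 * β * K * z) (2 * β * K) z := by
    simpa using (hasDerivAt_id z).const_mul (2 * β * K)
  have h2 : HasDerivAt (fun z : ℝ => cfun (Real.exp (-β)) (2 * β * K * z))
      (c1 (Real.exp (-β)) (2 * β * K * z) * (2 * β * K)) z :=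
    (hasDerivAt_cfun hs (2 * β * K * z)).comp z hinner
  have h := h1.sub h2
  refine h.congr_deriv (Eq.symm ?_)
  ring

lemma deriv2_G (β K z : ℝ) :
    iteratedDeriv 2 (Gfun β K) z
      = 2 * β * K - (2 * β * K) ^ 2 * c2 (Real.exp (-β)) (2 * β * K * z) := by
  have hs : 0 < Real.exp (-β) := Real.exp_pos _
  have hd1 : deriv (Gfun β K)
      = fun z => 2 * β * K * z - 2 * β * K * c1 (Real.exp (-β)) (2 * β * K * z) :=
    funext fun z => (hasDerivAt_G β K z).deriv
  have hinner : HasDerivAt (fun z : ℝ => 2 * β * K * z) (2 * β * K) z := by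
    simpa using (hasDerivAt_id z).const_mul (2 * β * K)
  have hd2 : HasDerivAt
      (fun z => 2 * β * K * z - 2 * β * K * c1 (Real.exp (-β)) (2 * β * K * z))
      (2 * β * K - (2 * β * K) ^ 2 * c2 (Real.exp (-β)) (2 * β * K * z)) z := by
    have h2 := ((hasDerivAt_c1 hs (2 * β * K * z)).comp z hinner).const_mul (2 * β * K)
    have h := hinner.sub h2
    refine h.congr_deriv (Eq.symm ?_)
    ring
  rw [show (2:ℕ) = 1 + 1 from rfl, iteratedDeriv_succ, iteratedDeriv_one, hd1, hd2.deriv]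

lemma mainlemma (β K : ℝ) (hβ : Real.log 4 < β) (hK : 0 < K) (z : ℝ)
    (hmin : IsMinOn (Gfun β K) Set.univ z) :
    0 < iteratedDeriv 2 (Gfun β K) z := by
  have hlog4 : 0 < Real.log 4 := Real.log_pos (by norm_num)
  have hβ0 : 0 < β := lt_trans hlog4 hβ
  rw [deriv2_G β K z]
  set s := Real.exp (-β) with hsdef
  have hs : 0 < s := Real.exp_pos _
  have hs4 : s < 1/4 := by
    have h : s < (4:ℝ)⁻¹ := by
      rw [hsdef]
      calc Real.exp (-β) < Real.exp (-Real.log 4) := Real.exp_lt_exp.2 (by linarith)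
        _ = (4:ℝ)⁻¹ := by
            rw [Real.exp_neg, Real.exp_log (by norm_num : (0:ℝ) < 4)]
    linarith
  set b := 2 * β * K with hbdef
  have hb : 0 < b := by rw [hbdef]; positivity
  have hG0 : Gfun β K 0 = 0 := by
    rw [Gfun_eq]; simp [cfun_zero (Real.exp_pos (-β))]
  suffices h : b * c2 s (b * z) < 1 by nlinarith [mul_pos hb (show 0 < 1 - b * c2 s (b*z) by linarith)]
  rcases eq_or_ne z 0 with rfl | hz
  · rw [mul_zero]
    by_contra hcon
    push_neg at hcon
    obtain ⟨t1, ht1, hc⟩ := keyB hs hs4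
    have hx := isMinOn_iff.1 hmin (t1 / b) (Set.mem_univ _)
    rw [hG0] at hx
    have hbx : b * (t1 / b) = t1 := by field_simp
    have e1 : Gfun β K (t1 / b) = b * (t1 / b) ^ 2 / 2 - cfun s t1 := by
      rw [Gfun_eq, ← hsdef, ← hbdef, hbx]
    rw [e1] at hx
    have e2 : b * (t1 / b) ^ 2 / 2 = t1 ^ 2 / (2 * b) := by field_simp
    rw [e2] at hx
    have h3 : 2 * b * cfun s t1 ≤ t1 ^ 2 := by
      have := (le_div_iff₀ (by positivity : (0:ℝ) < 2 * b)).1 (by linarith : cfun s t1 ≤ t1 ^ 2 / (2 * b))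
      linarith
    have h1 : b * (c2 s 0 * t1 ^ 2 / 2) < b * cfun s t1 := mul_lt_mul_of_pos_left hc hb
    have h2 : t1 ^ 2 ≤ b * c2 s 0 * t1 ^ 2 := le_mul_of_one_le_left (sq_nonneg t1) hcon
    nlinarith
  · have hloc : IsLocalMin (Gfun β K) z := hmin.isLocalMin Filter.univ_mem
    have hd0 : b * z - b * c1 s (b * z) = 0 := by
      have := hloc.deriv_eq_zero
      rw [(hasDerivAt_G β K z).deriv] at this
      rw [hbdef, hsdef]; exact this
    have hc1z : c1 s (b * z) = z := by
      have h : b * c1 s (b * z) = b * z := by linarith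
      exact mul_left_cancel₀ (ne_of_gt hb) h
    have hle0 : Gfun β K z ≤ 0 := by
      have := isMinOn_iff.1 hmin 0 (Set.mem_univ _)
      rwa [hG0] at this
    rcases hz.lt_or_gt with hneg | hpos
    · -- z < 0, use t = -(b*z) = b * (-z)
      have ht : 0 < -(b * z) := by nlinarith
      have hFf : Ff s (-(b * z)) ≤ 0 := by
        have heq : Ff s (-(b * z)) = Gfun β K z := by
          unfold Ff
          rw [c1_odd, cfun_even, hc1z, Gfun_eq, ← hsdef, ← hbdef]
          ring
        rw [heq]; exact hle0
      have hphi := keyC hs hs4 ht hFf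
      unfold phiF at hphi
      rw [c1_odd, c2_even, hc1z] at hphi
      -- hphi : -(b*z) * c2 s (b*z) - -z < 0
      have h2 : b * c2 s (b * z) * (-z) < 1 * (-z) := by nlinarith
      exact lt_of_mul_lt_mul_right h2 (by linarith)
    · -- z > 0
      have ht : 0 < b * z := mul_pos hb hpos
      have hFf : Ff s (b * z) ≤ 0 := by
        have heq : Ff s (b * z) = Gfun β K z := by
          unfold Ff
          rw [hc1z, Gfun_eq, ← hsdef, ← hbdef]
          ring
        rw [heq]; exact hle0
      have hphi := keyC hs hs4 ht hFf
      unfold phiF at hphi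
      rw [hc1z] at hphi
      have h2 : b * c2 s (b * z) * z < 1 * z := by nlinarith
      exact lt_of_mul_lt_mul_right h2 (le_of_lt hpos)

/-- Fix `β > log 4` and `K > 0`.  Every global minimum point `z` of
`G_{β,K}` over `ℝ` satisfies `G_{β,K}''(z) > 0`; in particular this holds for `z = 0`
whenever `0` is a global minimum point, and for every nonzero global minimum point. -/
theorem Gfun_minimum_types_first_order (β K : ℝ) (hβ : Real.log 4 < β) (hK : 0 < K) :
    (∀ z : ℝ, IsMinOn (Gfun β K) Set.univ z → 0 < iteratedDeriv 2 (Gfun β K) z) ∧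
    (IsMinOn (Gfun β K) Set.univ 0 → 0 < iteratedDeriv 2 (Gfun β K) 0) ∧
    (∀ z : ℝ, z ≠ 0 → IsMinOn (Gfun β K) Set.univ z →
      0 < iteratedDeriv 2 (Gfun β K) z) :=
  ⟨fun z h => mainlemma β K hβ hK z h, fun h => mainlemma β K hβ hK 0 h,
    fun z _ h => mainlemma β K hβ hK z h⟩
end
end
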